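/- arXiv:1811.07731 — 2 statements merged into one kernel-verified Lean document; each statement's English description precedes it below -/
import Mathlib

section
/- If Φ(z) = 1 + Σ_{n≥1} Φ_n z^n is analytic in the open unit disk with Re(Φ(z)) > 0 for all |z| < 1, then |Φ_n| ≤ 2 for all n ≥ 1. -/
open Metric Complex intervalIntegral MeasureTheory Filter Real

private lemma my_interval_integral_conj (f : ℝ → ℂ) (a b : ℝ) :
    (∫ x in a..b, (starRingEnd ℂ) (f x)) = (starRingEnd ℂ) (∫ x in a..b, f x) := by
  simp only [intervalIntegral, map_sub]
  rw [← integral_conj, ← integral_conj]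

/-- Carathéodory's lemma: if Φ is analytic on the open unit disk with Φ(0)=1 and
Re Φ(z) > 0 there, then all Taylor coefficients Φ_n (n ≥ 1) satisfy |Φ_n| ≤ 2. -/
theorem caratheodory_coeff_bound (Φ : ℂ → ℂ)
    (hΦ : DifferentiableOn ℂ Φ (ball (0 : ℂ) 1))
    (h0 : Φ 0 = 1)
    (hre : ∀ z ∈ ball (0 : ℂ) 1, 0 < (Φ z).re) :
    ∀ n : ℕ, 1 ≤ n → ‖iteratedDeriv n Φ 0 / (Nat.factorial n : ℂ)‖ ≤ 2 := by
  intro n hn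
  set c : ℂ := iteratedDeriv n Φ 0 / (Nat.factorial n : ℂ) with hc
  have key : ∀ r : ℝ, 0 < r → r < 1 → ‖c‖ * r ^ n ≤ 2 := by
    intro r hr0 hr1
    have hsub : closedBall (0:ℂ) r ⊆ ball 0 1 := closedBall_subset_ball hr1
    have hball : ball (0:ℂ) r ⊆ ball 0 1 := ball_subset_ball hr1.le
    have hrne : r ≠ 0 := ne_of_gt hr0
    have hrC : ((r:ℂ)) ≠ 0 := by exact_mod_cast hrne
    -- power series on ball of radius r
    set R : NNReal := ⟨r, hr0.le⟩ with hRdef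
    have hps : HasFPowerSeriesOnBall Φ (cauchyPowerSeries Φ 0 r) 0 R :=
      DifferentiableOn.hasFPowerSeriesOnBall (R := R) (hΦ.mono hsub) hr0
    -- continuity of the boundary function
    have hmem : ∀ θ : ℝ, circleMap 0 r θ ∈ ball (0:ℂ) 1 := by
      intro θ
      rw [mem_ball_zero_iff]
      simp [norm_circleMap_zero, abs_of_pos hr0, hr1]
    have hcΦ : Continuous fun θ : ℝ => Φ (circleMap 0 r θ) :=
      hΦ.continuousOn.comp_continuous (continuous_circleMap 0 r) hmem
    -- Cauchy coefficient formula, as an interval integral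
    have cf : ∀ m : ℕ, iteratedDeriv m Φ 0 / (Nat.factorial m : ℂ) * (r:ℂ) ^ m
        = (2*(π:ℂ))⁻¹ * ∫ θ in (0:ℝ)..(2*π),
            Complex.exp (-(m*θ*I)) * Φ (circleMap 0 r θ) := by
      intro m
      have hA : iteratedDeriv m Φ 0
          = (Nat.factorial m) • (cauchyPowerSeries Φ 0 r m fun _ => (1:ℂ)) := by
        rw [iteratedDeriv_eq_iteratedFDeriv]
        exact (hps.factorial_smul 1 m).symm
      have hA2 : (cauchyPowerSeries Φ 0 r m fun _ => (1:ℂ))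
          = (2*(π:ℂ)*I)⁻¹ • ∮ z in C(0, r), ((1:ℂ) / (z - 0)) ^ m • (z - 0)⁻¹ • Φ z :=
        cauchyPowerSeries_apply Φ 0 r m 1
      have hint : (∮ z in C(0, r), ((1:ℂ) / (z - 0)) ^ m • (z - 0)⁻¹ • Φ z)
          = (I * ((r:ℂ)⁻¹) ^ m) * ∫ θ in (0:ℝ)..(2*π),
              Complex.exp (-(m*θ*I)) * Φ (circleMap 0 r θ) := by
        rw [circleIntegral, ← intervalIntegral.integral_const_mul]
        refine intervalIntegral.integral_congr fun θ _ => ?_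
        rw [deriv_circleMap]
        have hexp : Complex.exp (-(m*θ*I)) = (Complex.exp ((θ:ℂ)*I))⁻¹ ^ m := by
          rw [← Complex.exp_neg, ← Complex.exp_nat_mul]
          ring_nf
        have hz : Complex.exp ((θ:ℂ)*I) ≠ 0 := Complex.exp_ne_zero _
        simp only [circleMap_zero, smul_eq_mul, sub_zero, one_div, hexp]
        field_simp
        ring
      have hfac : ((Nat.factorial m : ℂ)) ≠ 0 := by
        exact_mod_cast Nat.factorial_ne_zero m
      rw [hA, hA2, hint]
      have hπ : ((π:ℂ)) ≠ 0 := by exact_mod_cast Real.pi_ne_zero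
      have hIne : (I:ℂ) ≠ 0 := I_ne_zero
      simp only [smul_eq_mul, nsmul_eq_mul]
      have hd : (2*(π:ℂ)*I*(r:ℂ)^m*(Nat.factorial m : ℂ)) ≠ 0 := by
        simp [hπ, hIne, hrC, hfac, pow_ne_zero]
      field_simp
      ring_nf
      rw [← mul_pow, mul_inv_cancel₀ hrC, one_pow, one_mul]
    -- mean value : ∫ Φ on the circle = 2π
    have mean : (∫ θ in (0:ℝ)..(2*π), Φ (circleMap 0 r θ)) = 2*(π:ℂ) := by
      have h := cf 0
      simp only [iteratedDeriv_zero, h0, Nat.factorial_zero, Nat.cast_one, div_one, pow_zero,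
        mul_one, Nat.cast_zero, zero_mul, neg_zero, Complex.exp_zero, one_mul] at h
      have hπ : ((π:ℂ)) ≠ 0 := by exact_mod_cast Real.pi_ne_zero
      field_simp at h
      linear_combination -h
    -- vanishing of the conjugate-index integral
    have B : (∫ θ in (0:ℝ)..(2*π), Complex.exp ((n:ℂ)*θ*I) * Φ (circleMap 0 r θ)) = 0 := by
      have hzero : (∮ z in C(0, r), z ^ (n-1) * Φ z) = 0 := by
        apply circleIntegral_eq_zero_of_differentiable_on_off_countable hr0.le
          Set.countable_empty
        · exact (continuous_pow _).continuousOn.mul (hΦ.continuousOn.mono hsub)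
        · rintro z ⟨hz, -⟩
          exact (differentiableAt_pow _).mul
            (hΦ.differentiableAt (isOpen_ball.mem_nhds (hball hz)))
      have hconv : (∮ z in C(0, r), z ^ (n-1) * Φ z)
          = (I * (r:ℂ) ^ n) * ∫ θ in (0:ℝ)..(2*π),
              Complex.exp ((n:ℂ)*θ*I) * Φ (circleMap 0 r θ) := by
        rw [circleIntegral, ← intervalIntegral.integral_const_mul]
        refine intervalIntegral.integral_congr fun θ _ => ?_
        rw [deriv_circleMap]
        have hpow : circleMap 0 r θ * (circleMap 0 r θ) ^ (n-1) = (circleMap 0 r θ) ^ n := by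
          rw [← pow_succ']
          congr 1
          omega
        have hexp : Complex.exp ((n:ℂ)*θ*I) = (Complex.exp ((θ:ℂ)*I)) ^ n := by
          rw [← Complex.exp_nat_mul]
          ring_nf
        simp only [smul_eq_mul]
        rw [mul_comm (circleMap 0 r θ) I, mul_assoc, mul_assoc, ← mul_assoc (circleMap 0 r θ),
          hpow]
        simp only [circleMap_zero, mul_pow, hexp]
        ring
      rw [hconv] at hzero
      have : (I * (r:ℂ) ^ n) ≠ 0 := mul_ne_zero I_ne_zero (pow_ne_zero _ hrC)
      exact (mul_eq_zero.mp hzero).resolve_left this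
    -- conjugate version
    have Bconj : (∫ θ in (0:ℝ)..(2*π),
        Complex.exp (-(n*θ*I)) * (starRingEnd ℂ) (Φ (circleMap 0 r θ))) = 0 := by
      have : (∫ θ in (0:ℝ)..(2*π),
          (starRingEnd ℂ) (Complex.exp ((n:ℂ)*θ*I) * Φ (circleMap 0 r θ))) = 0 := by
        rw [my_interval_integral_conj, B, map_zero]
      refine Eq.trans ?_ this
      refine intervalIntegral.integral_congr fun θ _ => ?_
      rw [map_mul, ← Complex.exp_conj]
      congr 1
      simp [mul_comm]
    -- replace Φ by twice its real part in the coefficient integral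
    have main : c * (r:ℂ) ^ n = (2*(π:ℂ))⁻¹ * ∫ θ in (0:ℝ)..(2*π),
        Complex.exp (-(n*θ*I)) * (2 * ((Φ (circleMap 0 r θ)).re : ℂ)) := by
      rw [hc, cf n]
      congr 1
      have hce : Continuous fun θ : ℝ => Complex.exp (-((n:ℂ)*(θ:ℂ)*I)) := by
        apply Complex.continuous_exp.comp
        exact ((continuous_const.mul Complex.continuous_ofReal).mul continuous_const).neg
      have hi1 : IntervalIntegrable
          (fun θ : ℝ => Complex.exp (-(n*θ*I)) * (2 * ((Φ (circleMap 0 r θ)).re : ℂ)))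
          volume 0 (2*π) := by
        apply Continuous.intervalIntegrable
        exact hce.mul (continuous_const.mul (Complex.continuous_ofReal.comp
            (Complex.continuous_re.comp hcΦ)))
      have hi2 : IntervalIntegrable
          (fun θ : ℝ => Complex.exp (-(n*θ*I)) * (starRingEnd ℂ) (Φ (circleMap 0 r θ)))
          volume 0 (2*π) := by
        apply Continuous.intervalIntegrable
        exact hce.mul (Complex.continuous_conj.comp hcΦ)
      have hsplit : (∫ θ in (0:ℝ)..(2*π), Complex.exp (-(n*θ*I)) * Φ (circleMap 0 r θ))
          = (∫ θ in (0:ℝ)..(2*π),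
              Complex.exp (-(n*θ*I)) * (2 * ((Φ (circleMap 0 r θ)).re : ℂ)))
            - ∫ θ in (0:ℝ)..(2*π),
              Complex.exp (-(n*θ*I)) * (starRingEnd ℂ) (Φ (circleMap 0 r θ)) := by
        rw [← intervalIntegral.integral_sub hi1 hi2]
        refine intervalIntegral.integral_congr fun θ _ => ?_
        have h1 := Complex.add_conj (Φ (circleMap 0 r θ))
        push_cast at h1
        linear_combination Complex.exp (-((n:ℂ)*θ*I)) * h1
      rw [hsplit, Bconj, sub_zero]
    -- real part of mean value
    have hre_int : (∫ θ in (0:ℝ)..(2*π), (Φ (circleMap 0 r θ)).re) = 2*π := by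
      have h := Complex.reCLM.intervalIntegral_comp_comm (hcΦ.intervalIntegrable (μ := MeasureTheory.volume) 0 (2*π))
      have h2 : (∫ θ in (0:ℝ)..(2*π), (Φ (circleMap 0 r θ)).re)
          = Complex.reCLM (∫ θ in (0:ℝ)..(2*π), Φ (circleMap 0 r θ)) := h
      rw [h2, mean]
      simp
    -- norm estimate
    have hnorm : ‖c * (r:ℂ) ^ n‖ ≤ 2 := by
      rw [main]
      have h1 : ‖(2*(π:ℂ))⁻¹‖ = (2*π)⁻¹ := by
        simp [abs_of_pos Real.pi_pos]
      rw [norm_mul, h1]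
      have h2 : ‖∫ θ in (0:ℝ)..(2*π),
          Complex.exp (-(n*θ*I)) * (2 * ((Φ (circleMap 0 r θ)).re : ℂ))‖
          ≤ ∫ θ in (0:ℝ)..(2*π), 2 * (Φ (circleMap 0 r θ)).re := by
        have := intervalIntegral.norm_integral_le_integral_norm (μ := MeasureTheory.volume)
          (f := fun θ : ℝ => Complex.exp (-(n*θ*I)) * (2 * ((Φ (circleMap 0 r θ)).re : ℂ)))
          (a := 0) (b := 2*π) Real.two_pi_pos.le
        refine this.trans (le_of_eq ?_)
        refine intervalIntegral.integral_congr fun θ _ => ?_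
        have hpos : 0 < (Φ (circleMap 0 r θ)).re := hre _ (hmem θ)
        rw [norm_mul]
        have he1 : ‖Complex.exp (-(↑n*↑θ*I))‖ = 1 := by
          rw [Complex.norm_exp]
          simp
        rw [he1, one_mul]
        simp [map_mul, Complex.norm_real, Real.norm_eq_abs, abs_of_pos hpos]
      have h3 : (∫ θ in (0:ℝ)..(2*π), 2 * (Φ (circleMap 0 r θ)).re) = 2 * (2*π) := by
        rw [intervalIntegral.integral_const_mul, hre_int]
      calc (2*π)⁻¹ * ‖∫ θ in (0:ℝ)..(2*π),
              Complex.exp (-(n*θ*I)) * (2 * ((Φ (circleMap 0 r θ)).re : ℂ))‖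
          ≤ (2*π)⁻¹ * (2 * (2*π)) := by
            apply mul_le_mul_of_nonneg_left _ (by positivity)
            rw [← h3]; exact h2
        _ = 2 := by
            field_simp
    calc ‖c‖ * r ^ n = ‖c * (r:ℂ) ^ n‖ := by
          rw [norm_mul, norm_pow, Complex.norm_real, Real.norm_eq_abs, abs_of_pos hr0]
      _ ≤ 2 := hnorm
  -- pass to the limit r → 1⁻
  have hlim : Tendsto (fun r : ℝ => ‖c‖ * r ^ n) (nhdsWithin 1 (Set.Iio 1)) (nhds (‖c‖ * 1 ^ n)) :=
    ((continuous_const.mul (continuous_pow n)).tendsto 1).mono_left nhdsWithin_le_nhds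
  have hev : ∀ᶠ r in nhdsWithin (1:ℝ) (Set.Iio 1), ‖c‖ * r ^ n ≤ 2 := by
    filter_upwards [Ioo_mem_nhdsLT_of_mem (Set.mem_Ioc.mpr ⟨zero_lt_one, le_refl (1:ℝ)⟩)]
      with r hr
    exact key r hr.1 hr.2
  have := le_of_tendsto hlim hev
  simpa using this
end

section
/- Suppose (μ+2λ+6ξδ)[((μ−1)/2)a_2² + c a_3] = Φ_1 t_2 + Φ_2 t_1² and (μ+2λ+6ξδ)[((μ+3)/2)a_2² − c a_3] = Φ_1 s_2 + Φ_2 s_1², where c = 1 + 6δ/(2λ+1), |Φ_1|, |Φ_2| ≤ 2, |t_i|, |s_i| ≤ 1, μ ≥ 0, λ ≥ 1, δ ≥ 0, ξ = (2λ+μ)/(2λ+1). Then (μ+2λ+6ξδ)(μ+1) a_2² = Φ_1(t_2+s_2) + Φ_2(t_1²+s_1²), and hence |a_2| ≤ √(8/((μ+2λ+6ξδ)(μ+1))). -/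
/-- Adding the two coefficient equations gives
(μ+2λ+6ξδ)(μ+1)a₂² = Φ₁(t₂+s₂) + Φ₂(t₁²+s₁²), hence
|a₂| ≤ √(8/((μ+2λ+6ξδ)(μ+1))). -/
theorem a2_bound_second (mu lam del xi c : ℝ)
    (hlam : 1 ≤ lam) (hmu : 0 ≤ mu) (hdel : 0 ≤ del)
    (hxi : xi = (2 * lam + mu) / (2 * lam + 1))
    (hc : c = 1 + 6 * del / (2 * lam + 1))
    (a2 a3 Phi1 Phi2 t1 t2 s1 s2 : ℂ)
    (h1 : ((mu : ℂ) + 2 * lam + 6 * xi * del) *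
        ((((mu : ℂ) - 1) / 2) * a2 ^ 2 + (c : ℂ) * a3) = Phi1 * t2 + Phi2 * t1 ^ 2)
    (h2 : ((mu : ℂ) + 2 * lam + 6 * xi * del) *
        ((((mu : ℂ) + 3) / 2) * a2 ^ 2 - (c : ℂ) * a3) = Phi1 * s2 + Phi2 * s1 ^ 2)
    (hPhi1 : ‖Phi1‖ ≤ 2) (hPhi2 : ‖Phi2‖ ≤ 2)
    (ht1 : ‖t1‖ ≤ 1) (ht2 : ‖t2‖ ≤ 1) (hs1 : ‖s1‖ ≤ 1) (hs2 : ‖s2‖ ≤ 1)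
    (hpos : 0 < mu + 2 * lam + 6 * xi * del) :
    ((mu : ℂ) + 2 * lam + 6 * xi * del) * ((mu : ℂ) + 1) * a2 ^ 2 =
        Phi1 * (t2 + s2) + Phi2 * (t1 ^ 2 + s1 ^ 2) ∧
    ‖a2‖ ≤ Real.sqrt (8 / ((mu + 2 * lam + 6 * xi * del) * (mu + 1))) := by
  have key : ((mu : ℂ) + 2 * lam + 6 * xi * del) * ((mu : ℂ) + 1) * a2 ^ 2 =
      Phi1 * (t2 + s2) + Phi2 * (t1 ^ 2 + s1 ^ 2) := by
    have := congrArg₂ (· + ·) h1 h2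
    linear_combination this
  refine ⟨key, ?_⟩
  set M : ℝ := mu + 2 * lam + 6 * xi * del with hM
  have hmu1 : (0:ℝ) < mu + 1 := by linarith
  have hMpos : 0 < M * (mu + 1) := mul_pos hpos hmu1
  have hcast : ((M : ℂ)) * ((mu : ℂ) + 1) * a2 ^ 2 =
      Phi1 * (t2 + s2) + Phi2 * (t1 ^ 2 + s1 ^ 2) := by
    rw [hM]; push_cast; linear_combination key
  have hnorm : ‖((M : ℂ)) * ((mu : ℂ) + 1) * a2 ^ 2‖ ≤ 8 := by
    rw [hcast]
    calc ‖Phi1 * (t2 + s2) + Phi2 * (t1 ^ 2 + s1 ^ 2)‖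
        ≤ ‖Phi1 * (t2 + s2)‖ + ‖Phi2 * (t1 ^ 2 + s1 ^ 2)‖ := norm_add_le _ _
      _ = ‖Phi1‖ * ‖t2 + s2‖ + ‖Phi2‖ * ‖t1 ^ 2 + s1 ^ 2‖ := by rw [norm_mul, norm_mul]
      _ ≤ 2 * 2 + 2 * 2 := by
          gcongr
          · calc ‖t2 + s2‖ ≤ ‖t2‖ + ‖s2‖ := norm_add_le _ _
              _ ≤ 2 := by linarith
          · calc ‖t1 ^ 2 + s1 ^ 2‖ ≤ ‖t1‖^2 + ‖s1‖^2 := by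
                  calc ‖t1^2 + s1^2‖ ≤ ‖t1^2‖ + ‖s1^2‖ := norm_add_le _ _
                    _ = ‖t1‖^2 + ‖s1‖^2 := by rw [norm_pow, norm_pow]
              _ ≤ 2 := by nlinarith [norm_nonneg t1, norm_nonneg s1]
      _ = 8 := by norm_num
  have hnorm2 : M * (mu + 1) * ‖a2‖ ^ 2 ≤ 8 := by
    have heq : ‖((M : ℂ)) * ((mu : ℂ) + 1) * a2 ^ 2‖ = M * (mu + 1) * ‖a2‖ ^ 2 := by
      have h1' : ((mu : ℂ) + 1) = ((mu + 1 : ℝ) : ℂ) := by push_cast; ring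
      rw [norm_mul, norm_mul, norm_pow, h1', Complex.norm_real, Complex.norm_real,
        Real.norm_eq_abs, Real.norm_eq_abs, abs_of_pos hpos, abs_of_pos hmu1]
    linarith [heq ▸ hnorm]
  have h8 : ‖a2‖ ^ 2 ≤ 8 / (M * (mu + 1)) := by
    rw [le_div_iff₀ hMpos]; linarith [hnorm2]
  calc ‖a2‖ = Real.sqrt (‖a2‖ ^ 2) := by rw [Real.sqrt_sq (norm_nonneg _)]
    _ ≤ Real.sqrt (8 / (M * (mu + 1))) := Real.sqrt_le_sqrt h8
end
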